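/- Uniform stability of approximate filtering distributions (stability clause of Theorem 3.8): Suppose μ_prior is supported on a ball, i.e. μ_prior({ū ∈ X : ‖ū‖_X ≤ M}) = 1 for some M > 0. Then for every R > 0 and Λ > 0 there exists C = C(R, ρ, N, M, Λ) > 0 such that: for every Borel measurable forward operator S^Δ : [0,T] × X → X satisfying the energy bound ‖S^Δ_t(ū)‖_X ≤ ‖ū‖_X for all t, ū, and all Borel measurable observables L^Δ_1, …, L^Δ_N : X → ℝ^d with ‖L^Δ_j‖_{L²(μ_prior)} ≤ Λ for each j, the associated filtering distributions ν^{Δ,y}_t satisfy W1(ν^{Δ,y}_t, ν^{Δ,y'}_t) ≤ C |y − y'|_Γ for all t ∈ [0,T] and all y, y' ∈ (ℝ^d)^N with |y|_Γ ≤ R and |y'|_Γ ≤ R. In particular, the Lipschitz constant is independent of the discretization parameter Δ. -/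

import Mathlib

open MeasureTheory
open scoped BigOperators ENNReal Matrix

noncomputable section

/-- The Γ-weighted norm `|y|_Γ = sqrt ⟨y, Γ⁻¹ y⟩` on `ℝ^d`. -/
def gammaNorm {d : ℕ} (Γ : Matrix (Fin d) (Fin d) ℝ) (y : Fin d → ℝ) : ℝ :=
  Real.sqrt (y ⬝ᵥ (Γ⁻¹).mulVec y)

/-- The Γ-norm of a tuple of measurements: `(Σ_k |y_k|_Γ²)^{1/2}`. -/
def gammaNormTuple {d N : ℕ} (Γ : Matrix (Fin d) (Fin d) ℝ) (y : Fin N → Fin d → ℝ) : ℝ :=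
  Real.sqrt (∑ k, (gammaNorm Γ (y k)) ^ 2)

/-- A noise density satisfying (N.1)–(N.3). -/
structure IsNoiseDensity {d : ℕ} (Γ : Matrix (Fin d) (Fin d) ℝ) (ρ : (Fin d → ℝ) → ℝ)
    (Lρ Cb Ct : ℝ) : Prop where
  Lρ_pos : 0 < Lρ
  Cb_pos : 0 < Cb
  Ct_pos : 0 < Ct
  pos : ∀ y, 0 < ρ y
  lip : ∀ y y', |ρ y - ρ y'| ≤ Lρ * gammaNorm Γ (y - y')
  bdd : ∀ y, ρ y ≤ Cb
  tail : ∀ y, Ct⁻¹ * Real.exp (-(1 / 2) * (gammaNorm Γ y) ^ 2) ≤ ρ y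

/-- Wasserstein-1 distance in Kantorovich–Rubinstein dual form. -/
def W1 {X : Type*} [NormedAddCommGroup X] [MeasurableSpace X] (μ ν : Measure X) : ℝ :=
  sSup {r : ℝ | ∃ Φ : X → ℝ, LipschitzWith 1 Φ ∧ Φ 0 = 0 ∧
    r = (∫ u, Φ u ∂μ) - ∫ u, Φ u ∂ν}

/-- Unnormalized posterior density given the first `k` measurements. -/
def postDensity {X : Type*} {d N : ℕ} (ρ : (Fin d → ℝ) → ℝ)
    (L : Fin N → X → Fin d → ℝ) (y : Fin N → Fin d → ℝ) (k : ℕ) (u : X) : ℝ :=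
  ∏ j ∈ Finset.univ.filter (fun j : Fin N => (j : ℕ) < k), ρ (y j - L j u)

/-- Normalization constant `Z_k(y_{1:k})`. -/
def postZ {X : Type*} [MeasurableSpace X] {d N : ℕ} (μp : Measure X) (ρ : (Fin d → ℝ) → ℝ)
    (L : Fin N → X → Fin d → ℝ) (y : Fin N → Fin d → ℝ) (k : ℕ) : ℝ :=
  ∫ u, postDensity ρ L y k u ∂μp

/-- Bayesian posterior `μ^{y_{1:k}}` on the initial data. -/
def posteriorK {X : Type*} [MeasurableSpace X] {d N : ℕ} (μp : Measure X)
    (ρ : (Fin d → ℝ) → ℝ) (L : Fin N → X → Fin d → ℝ) (y : Fin N → Fin d → ℝ) (k : ℕ) :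
    Measure X :=
  μp.withDensity fun u => ENNReal.ofReal (postDensity ρ L y k u / postZ μp ρ L y k)

/-- The number of measurement times `t_j` (j = 1, …, N) with `t_j ≤ t`; for
`t ∈ [t_k, t_{k+1})` this equals `k`, and it equals `N` for `t = t_N = T`. -/
def numObs {N : ℕ} (ts : Fin (N + 1) → ℝ) (t : ℝ) : ℕ :=
  (Finset.univ.filter (fun j : Fin N => ts j.succ ≤ t)).card

/-- The filtering distribution `ν^y_t = (S_t)_# μ^{y_{1:k}}` for `t ∈ [t_k, t_{k+1})`. -/
def filteringDist {X : Type*} [MeasurableSpace X] {d N : ℕ} (μp : Measure X)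
    (ρ : (Fin d → ℝ) → ℝ) (ts : Fin (N + 1) → ℝ) (S : ℝ → X → X)
    (L : Fin N → X → Fin d → ℝ) (y : Fin N → Fin d → ℝ) (t : ℝ) : Measure X :=
  (posteriorK μp ρ L y (numObs ts t)).map (S t)



section Aux

variable {d : ℕ} {Γ : Matrix (Fin d) (Fin d) ℝ}

lemma q_nonneg (hΓ : Γ.PosDef) (z : Fin d → ℝ) : 0 ≤ z ⬝ᵥ (Γ⁻¹).mulVec z := by
  have := (hΓ.inv).posSemidef.re_dotProduct_nonneg z
  simpa using this

lemma sq_gammaNorm (hΓ : Γ.PosDef) (z : Fin d → ℝ) :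
    (gammaNorm Γ z) ^ 2 = z ⬝ᵥ (Γ⁻¹).mulVec z :=
  Real.sq_sqrt (q_nonneg hΓ z)

lemma gammaNorm_nonneg (z : Fin d → ℝ) : 0 ≤ gammaNorm Γ z := Real.sqrt_nonneg _

lemma gammaNorm_le_tuple {N : ℕ} (y : Fin N → Fin d → ℝ) (j : Fin N) :
    gammaNorm Γ (y j) ≤ gammaNormTuple Γ y := by
  rw [show gammaNorm Γ (y j) = Real.sqrt ((gammaNorm Γ (y j))^2) from
    (Real.sqrt_sq (gammaNorm_nonneg _)).symm]
  exact Real.sqrt_le_sqrt (Finset.single_le_sum (f := fun k => (gammaNorm Γ (y k))^2)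
    (fun k _ => sq_nonneg _) (Finset.mem_univ j))

lemma gammaNormTuple_nonneg {N : ℕ} (y : Fin N → Fin d → ℝ) : 0 ≤ gammaNormTuple Γ y :=
  Real.sqrt_nonneg _

lemma parallelogram (a b : Fin d → ℝ) :
    (a - b) ⬝ᵥ (Γ⁻¹).mulVec (a - b) + (a + b) ⬝ᵥ (Γ⁻¹).mulVec (a + b)
      = 2 * (a ⬝ᵥ (Γ⁻¹).mulVec a) + 2 * (b ⬝ᵥ (Γ⁻¹).mulVec b) := by
  simp only [Matrix.mulVec_add, Matrix.mulVec_sub, add_dotProduct,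
    sub_dotProduct, dotProduct_add, dotProduct_sub]
  ring

lemma sq_gammaNorm_sub_le (hΓ : Γ.PosDef) (a b : Fin d → ℝ) :
    (gammaNorm Γ (a - b)) ^ 2 ≤ 2 * (gammaNorm Γ a)^2 + 2 * (gammaNorm Γ b)^2 := by
  rw [sq_gammaNorm hΓ, sq_gammaNorm hΓ, sq_gammaNorm hΓ]
  have h := parallelogram (Γ := Γ) a b
  have h2 := q_nonneg hΓ (a + b)
  linarith

lemma gammaNorm_zero : gammaNorm Γ 0 = 0 := by
  simp [gammaNorm, Matrix.mulVec_zero]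

lemma continuous_gammaNorm : Continuous (fun z => gammaNorm Γ z) := by
  apply Real.continuous_sqrt.comp
  simp only [dotProduct, Matrix.mulVec]
  fun_prop


lemma IsNoiseDensity.continuous {ρ : (Fin d → ℝ) → ℝ} {Lρ Cb Ct : ℝ}
    (hρ : IsNoiseDensity Γ ρ Lρ Cb Ct) : Continuous ρ := by
  rw [continuous_iff_continuousAt]
  intro y0
  have hg : Filter.Tendsto (fun y => Lρ * gammaNorm Γ (y - y0)) (nhds y0) (nhds 0) := by
    have : Filter.Tendsto (fun y => Lρ * gammaNorm Γ (y - y0)) (nhds y0)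
        (nhds (Lρ * gammaNorm Γ (y0 - y0))) :=
      (continuous_const.mul (continuous_gammaNorm.comp
        (continuous_id.sub continuous_const))).tendsto y0
    simpa [gammaNorm_zero] using this
  have h0 : Filter.Tendsto (fun y => ρ y - ρ y0) (nhds y0) (nhds 0) :=
    squeeze_zero_norm (fun y => by rw [Real.norm_eq_abs]; exact hρ.lip y y0) hg
  have := h0.add (tendsto_const_nhds (x := ρ y0))
  simpa [ContinuousAt] using this

lemma prod_sub_prod_bound {ι : Type*} (s : Finset ι) (a b : ι → ℝ) (B δ : ℝ) (hB : 1 ≤ B)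
    (hδ0 : 0 ≤ δ) (ha : ∀ j ∈ s, |a j| ≤ B) (hb : ∀ j ∈ s, |b j| ≤ B)
    (hδ : ∀ j ∈ s, |a j - b j| ≤ δ) :
    |∏ j ∈ s, a j - ∏ j ∈ s, b j| ≤ B ^ s.card * s.card * δ := by
  classical
  induction s using Finset.cons_induction with
  | empty => simp
  | cons i s hi ih =>
    have hB0 : (0:ℝ) ≤ B := le_trans zero_le_one hB
    have hpa : ∀ j ∈ s, |a j| ≤ B := fun j hj => ha j (Finset.mem_cons_of_mem hj)
    have hpb : ∀ j ∈ s, |b j| ≤ B := fun j hj => hb j (Finset.mem_cons_of_mem hj)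
    have hpδ : ∀ j ∈ s, |a j - b j| ≤ δ := fun j hj => hδ j (Finset.mem_cons_of_mem hj)
    have IH := ih hpa hpb hpδ
    have hia : |a i| ≤ B := ha i (Finset.mem_cons_self i s)
    have hiδ : |a i - b i| ≤ δ := hδ i (Finset.mem_cons_self i s)
    have hprodb : |∏ j ∈ s, b j| ≤ B ^ s.card := by
      rw [Finset.abs_prod]
      calc ∏ j ∈ s, |b j| ≤ ∏ _j ∈ s, B :=
            Finset.prod_le_prod (fun j _ => abs_nonneg _) hpb
        _ = B ^ s.card := Finset.prod_const B
    rw [Finset.prod_cons, Finset.prod_cons]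
    have key : a i * ∏ j ∈ s, a j - b i * ∏ j ∈ s, b j
        = a i * (∏ j ∈ s, a j - ∏ j ∈ s, b j) + (a i - b i) * ∏ j ∈ s, b j := by ring
    rw [key, Finset.card_cons]
    calc |a i * (∏ j ∈ s, a j - ∏ j ∈ s, b j) + (a i - b i) * ∏ j ∈ s, b j|
        ≤ |a i| * |∏ j ∈ s, a j - ∏ j ∈ s, b j| + |a i - b i| * |∏ j ∈ s, b j| := by
          refine (abs_add_le _ _).trans ?_
          rw [abs_mul, abs_mul]
      _ ≤ B * (B ^ s.card * s.card * δ) + δ * B ^ s.card := by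
          gcongr
      _ ≤ B ^ (s.card + 1) * ((s.card:ℝ) + 1) * δ := by
          have hp : B ^ (s.card+1) = B ^ s.card * B := pow_succ B s.card
          have h5 : (0:ℝ) ≤ B ^ s.card := pow_nonneg hB0 _
          have h4 : (0:ℝ) ≤ (s.card:ℝ) := Nat.cast_nonneg _
          rw [hp]
          nlinarith [mul_nonneg (mul_nonneg (sub_nonneg.2 hB) h5) hδ0]
      _ = B ^ (s.card + 1) * ((s.card + 1 : ℕ):ℝ) * δ := by push_cast; ring

section PD

variable {X : Type*} {N : ℕ} {ρ : (Fin d → ℝ) → ℝ} {Lρ Cb Ct : ℝ}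
  {L : Fin N → X → Fin d → ℝ} {y y' : Fin N → Fin d → ℝ} {k : ℕ}

lemma card_filter_le_N (k : ℕ) :
    (Finset.univ.filter (fun j : Fin N => (j : ℕ) < k)).card ≤ N := by
  calc (Finset.univ.filter (fun j : Fin N => (j : ℕ) < k)).card
      ≤ (Finset.univ : Finset (Fin N)).card := Finset.card_filter_le _ _
    _ = N := by simp

lemma postDensity_pos (hρ : IsNoiseDensity Γ ρ Lρ Cb Ct) (u : X) :
    0 < postDensity ρ L y k u :=
  Finset.prod_pos fun _ _ => hρ.pos _

lemma postDensity_le (hρ : IsNoiseDensity Γ ρ Lρ Cb Ct) (u : X) :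
    postDensity ρ L y k u ≤ (max 1 Cb) ^ N := by
  calc postDensity ρ L y k u
      ≤ ∏ _j ∈ Finset.univ.filter (fun j : Fin N => (j : ℕ) < k), max 1 Cb :=
        Finset.prod_le_prod (fun _ _ => (hρ.pos _).le)
          (fun _ _ => (hρ.bdd _).trans (le_max_right _ _))
    _ = (max 1 Cb) ^ (Finset.univ.filter (fun j : Fin N => (j : ℕ) < k)).card :=
        Finset.prod_const _
    _ ≤ (max 1 Cb) ^ N := pow_le_pow_right₀ (le_max_left _ _) (card_filter_le_N k)

lemma postDensity_measurable [MeasurableSpace X] [MeasurableSpace (Fin d → ℝ)]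
    [BorelSpace (Fin d → ℝ)]
    (hρ : IsNoiseDensity Γ ρ Lρ Cb Ct) (hL : ∀ j, Measurable (L j)) :
    Measurable (postDensity ρ L y k) := by
  apply Finset.measurable_prod
  intro j _
  exact hρ.continuous.measurable.comp (measurable_const.sub (hL j))

lemma postDensity_diff (hρ : IsNoiseDensity Γ ρ Lρ Cb Ct) (u : X) :
    |postDensity ρ L y k u - postDensity ρ L y' k u|
      ≤ (max 1 Cb) ^ N * N * (Lρ * gammaNormTuple Γ (y - y')) := by
  have hδ0 : 0 ≤ Lρ * gammaNormTuple Γ (y - y') :=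
    mul_nonneg hρ.Lρ_pos.le (gammaNormTuple_nonneg _)
  have hB : (1:ℝ) ≤ max 1 Cb := le_max_left _ _
  set F := Finset.univ.filter (fun j : Fin N => (j : ℕ) < k) with hF
  have key : |postDensity ρ L y k u - postDensity ρ L y' k u|
      ≤ (max 1 Cb) ^ F.card * F.card * (Lρ * gammaNormTuple Γ (y - y')) := by
    apply prod_sub_prod_bound F _ _ _ _ hB hδ0
    · intro j _
      rw [abs_of_pos (hρ.pos _)]
      exact (hρ.bdd _).trans (le_max_right _ _)
    · intro j _
      rw [abs_of_pos (hρ.pos _)]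
      exact (hρ.bdd _).trans (le_max_right _ _)
    · intro j _
      have h1 := hρ.lip (y j - L j u) (y' j - L j u)
      have h2 : (y j - L j u) - (y' j - L j u) = y j - y' j := by abel
      rw [h2] at h1
      refine h1.trans ?_
      have h3 : gammaNorm Γ (y j - y' j) ≤ gammaNormTuple Γ (y - y') := by
        have := gammaNorm_le_tuple (Γ := Γ) (y - y') j
        simpa using this
      exact mul_le_mul_of_nonneg_left h3 hρ.Lρ_pos.le
  refine key.trans ?_
  gcongr
  · exact_mod_cast card_filter_le_N k
  · exact_mod_cast card_filter_le_N k

end PD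

section ZLB

variable {X : Type*} [MeasurableSpace X] {N : ℕ} {ρ : (Fin d → ℝ) → ℝ} {Lρ Cb Ct : ℝ}
  {L : Fin N → X → Fin d → ℝ} {y : Fin N → Fin d → ℝ} {k : ℕ}
  {μp : Measure X} [IsProbabilityMeasure μp]

lemma postDensity_integrable (hρ : IsNoiseDensity Γ ρ Lρ Cb Ct)
    (hL : ∀ j, Measurable (L j)) : Integrable (postDensity ρ L y k) μp := by
  refine Integrable.mono' (integrable_const ((max 1 Cb) ^ N))
    (postDensity_measurable hρ hL).aestronglyMeasurable ?_
  filter_upwards with u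
  rw [Real.norm_eq_abs, abs_of_pos (postDensity_pos hρ u)]
  exact postDensity_le hρ u

lemma postZ_lb (hN : 0 < N) (hΓ : Γ.PosDef)
    (hρ : IsNoiseDensity Γ ρ Lρ Cb Ct) (hL : ∀ j, Measurable (L j))
    {R Λ : ℝ} (hR : 0 < R) (hΛ : 0 < Λ)
    (hL2 : ∀ j, Integrable (fun u => (gammaNorm Γ (L j u)) ^ 2) μp ∧
      Real.sqrt (∫ u, (gammaNorm Γ (L j u)) ^ 2 ∂μp) ≤ Λ)
    (hy : gammaNormTuple Γ y ≤ R) :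
    (min 1 Ct⁻¹) ^ N * Real.exp (-(R ^ 2 + 2 * N ^ 2 * Λ ^ 2)) / 2 ≤ postZ μp ρ L y k := by
  set ε : ℝ := 2 * N * Λ ^ 2 with hε
  have hεpos : 0 < ε := by
    have : (0:ℝ) < N := by exact_mod_cast hN
    positivity
  set f : Fin N → X → ℝ := fun j u => (gammaNorm Γ (L j u)) ^ 2 with hf
  have hfmeas : ∀ j, Measurable (f j) := fun j =>
    ((continuous_gammaNorm.pow 2).measurable).comp (hL j)
  -- Chebyshev for each j
  have cheb : ∀ j, (μp {u | ε ≤ f j u}).toReal ≤ 1 / (2 * N) := by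
    intro j
    have h1 := mul_meas_ge_le_integral_of_nonneg
      (Filter.Eventually.of_forall (fun u => sq_nonneg (gammaNorm Γ (L j u)))) (hL2 j).1 ε
    have h2 : ∫ u, f j u ∂μp ≤ Λ ^ 2 := by
      have h3 : (0:ℝ) ≤ ∫ u, f j u ∂μp :=
        integral_nonneg fun u => sq_nonneg _
      have h4 := (hL2 j).2
      calc ∫ u, f j u ∂μp = (Real.sqrt (∫ u, f j u ∂μp)) ^ 2 := (Real.sq_sqrt h3).symm
        _ ≤ Λ ^ 2 := by
            gcongr
    have h5 : ε * (μp {u | ε ≤ f j u}).toReal ≤ Λ ^ 2 := le_trans h1 h2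
    rw [le_div_iff₀ (by positivity)]
    calc (μp {u | ε ≤ f j u}).toReal * (2 * N) = (ε * (μp {u | ε ≤ f j u}).toReal) / Λ ^ 2 := by
          field_simp [hε]
          ring
      _ ≤ Λ ^ 2 / Λ ^ 2 := by gcongr
      _ = 1 := by field_simp
  -- the good set
  set A : Set X := {u | ∀ j, f j u < ε} with hA
  have hAmeas : MeasurableSet A := by
    have : A = ⋂ j, (f j) ⁻¹' (Set.Iio ε) := by
      ext u; simp [hA]
    rw [this]
    exact MeasurableSet.iInter fun j => (hfmeas j) measurableSet_Iio
  have hAc : Aᶜ = ⋃ j, {u | ε ≤ f j u} := by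
    ext u; simp [hA, not_lt]
  have hμAc : (μp Aᶜ).toReal ≤ 1 / 2 := by
    have h6 : μp Aᶜ ≤ ∑ j : Fin N, μp {u | ε ≤ f j u} := by
      rw [hAc]
      exact (measure_iUnion_le _).trans (by rw [tsum_fintype])
    have h7 : (∑ j : Fin N, μp {u | ε ≤ f j u}).toReal ≤ 1 / 2 := by
      rw [ENNReal.toReal_sum (fun j _ => measure_ne_top _ _)]
      calc ∑ j : Fin N, (μp {u | ε ≤ f j u}).toReal ≤ ∑ _j : Fin N, 1 / (2 * (N:ℝ)) :=
            Finset.sum_le_sum fun j _ => cheb j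
        _ = N * (1 / (2 * N)) := by rw [Finset.sum_const]; simp [mul_comm]
        _ = 1 / 2 := by
            field_simp
    exact le_trans (ENNReal.toReal_mono (by
      refine ne_of_lt (lt_of_le_of_lt (Finset.sum_le_sum fun j _ => measure_mono (Set.subset_univ _)) ?_)
      simp [ENNReal.sum_lt_top]) h6) h7
  have hμA : 1 / 2 ≤ (μp A).toReal := by
    have h8 : (μp A).toReal = 1 - (μp Aᶜ).toReal := by
      have := measure_compl hAmeas (measure_ne_top μp A)
      have h9 : (μp Aᶜ).toReal = 1 - (μp A).toReal := by
        rw [this]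
        rw [ENNReal.toReal_sub_of_le (measure_mono (Set.subset_univ _)) (by simp)]
        simp
      linarith
    linarith
  -- pointwise lower bound on A
  set c1 : ℝ := (min 1 Ct⁻¹) ^ N * Real.exp (-(R ^ 2 + 2 * N ^ 2 * Λ ^ 2)) with hc1
  have hc1pos : 0 < c1 := by
    have hm : (0:ℝ) < min 1 Ct⁻¹ := lt_min one_pos (inv_pos.mpr hρ.Ct_pos)
    exact mul_pos (pow_pos hm N) (Real.exp_pos _)
  have hpdA : ∀ u ∈ A, c1 ≤ postDensity ρ L y k u := by
    intro u hu
    set F := Finset.univ.filter (fun j : Fin N => (j : ℕ) < k) with hFdef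
    have step1 : ∏ j ∈ F, (Ct⁻¹ * Real.exp (-(1/2) * (gammaNorm Γ (y j - L j u)) ^ 2))
        ≤ postDensity ρ L y k u :=
      Finset.prod_le_prod
        (fun j _ => (mul_pos (inv_pos.mpr hρ.Ct_pos) (Real.exp_pos _)).le)
        (fun j _ => hρ.tail _)
    have step2 : ∏ j ∈ F, (Ct⁻¹ * Real.exp (-(1/2) * (gammaNorm Γ (y j - L j u)) ^ 2))
        = Ct⁻¹ ^ F.card * Real.exp (∑ j ∈ F, -(1/2) * (gammaNorm Γ (y j - L j u)) ^ 2) := by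
      rw [Finset.prod_mul_distrib, Finset.prod_const, Real.exp_sum]
    have step3 : -(R ^ 2 + 2 * N ^ 2 * Λ ^ 2)
        ≤ ∑ j ∈ F, -(1/2) * (gammaNorm Γ (y j - L j u)) ^ 2 := by
      have hterm : ∀ j ∈ F, (1/2) * (gammaNorm Γ (y j - L j u)) ^ 2
          ≤ (gammaNorm Γ (y j)) ^ 2 + ε := by
        intro j _
        have h10 := sq_gammaNorm_sub_le hΓ (y j) (L j u)
        have h11 : f j u < ε := hu j
        simp only [hf] at h11
        linarith
      have hsum : ∑ j ∈ F, (1/2) * (gammaNorm Γ (y j - L j u)) ^ 2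
          ≤ ∑ j ∈ F, ((gammaNorm Γ (y j)) ^ 2 + ε) := Finset.sum_le_sum hterm
      have hsum2 : ∑ j ∈ F, ((gammaNorm Γ (y j)) ^ 2 + ε)
          ≤ R ^ 2 + 2 * N ^ 2 * Λ ^ 2 := by
        rw [Finset.sum_add_distrib, Finset.sum_const]
        have hy2 : ∑ j ∈ F, (gammaNorm Γ (y j)) ^ 2 ≤ R ^ 2 := by
          calc ∑ j ∈ F, (gammaNorm Γ (y j)) ^ 2 ≤ ∑ j : Fin N, (gammaNorm Γ (y j)) ^ 2 :=
                Finset.sum_le_sum_of_subset_of_nonneg (Finset.filter_subset _ _)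
                  (fun j _ _ => sq_nonneg _)
            _ = (gammaNormTuple Γ y) ^ 2 :=
                (Real.sq_sqrt (Finset.sum_nonneg fun j _ => sq_nonneg _)).symm
            _ ≤ R ^ 2 := by gcongr; exact gammaNormTuple_nonneg _
        have hcard : F.card • ε ≤ N * ε := by
          rw [nsmul_eq_mul]
          have : (F.card : ℝ) ≤ N := by exact_mod_cast card_filter_le_N k
          exact mul_le_mul_of_nonneg_right this hεpos.le
        have hNε : (N:ℝ) * ε = 2 * N ^ 2 * Λ ^ 2 := by rw [hε]; ring
        linarith
      have := hsum.trans hsum2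
      have heq : ∑ j ∈ F, -(1/2) * (gammaNorm Γ (y j - L j u)) ^ 2
          = -(∑ j ∈ F, (1/2) * (gammaNorm Γ (y j - L j u)) ^ 2) := by
        rw [← Finset.sum_neg_distrib]
        congr 1; ext j; ring
      rw [heq]
      linarith
    have step4 : (min 1 Ct⁻¹) ^ N ≤ Ct⁻¹ ^ F.card := by
      have hm0 : (0:ℝ) ≤ min 1 Ct⁻¹ := le_min zero_le_one (inv_pos.mpr hρ.Ct_pos).le
      calc (min 1 Ct⁻¹) ^ N ≤ (min 1 Ct⁻¹) ^ F.card :=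
            pow_le_pow_of_le_one hm0 (min_le_left _ _) (card_filter_le_N k)
        _ ≤ Ct⁻¹ ^ F.card := pow_le_pow_left₀ hm0 (min_le_right _ _) F.card
    calc c1 ≤ Ct⁻¹ ^ F.card * Real.exp (∑ j ∈ F, -(1/2) * (gammaNorm Γ (y j - L j u)) ^ 2) := by
          rw [hc1]
          exact mul_le_mul step4 (Real.exp_le_exp.mpr step3) (Real.exp_pos _).le
            (pow_nonneg (inv_pos.mpr hρ.Ct_pos).le _)
      _ = _ := step2.symm
      _ ≤ postDensity ρ L y k u := step1
  -- conclude
  have hint := postDensity_integrable (Γ := Γ) (y := y) (k := k) (μp := μp) hρ hL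
  calc c1 / 2
      = c1 * (1/2) := by ring
    _ ≤ c1 * (μp A).toReal := by
        have := hc1pos.le
        gcongr
    _ ≤ ∫ u in A, postDensity ρ L y k u ∂μp :=
        by
          have := setIntegral_ge_of_const_le_real hAmeas (measure_ne_top _ _) hpdA hint.integrableOn
          exact this
    _ ≤ postZ μp ρ L y k :=
        setIntegral_le_integral hint
          (Filter.Eventually.of_forall fun u => (postDensity_pos hρ u).le)

end ZLB

end Aux

/-- **Theorem 3.8, stability clause: uniform (in Δ) stability of approximate
filtering distributions.** -/
theorem approximate_filtering_uniform_stability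
    {X : Type*} [NormedAddCommGroup X] [NormedSpace ℝ X] [CompleteSpace X]
    [TopologicalSpace.SeparableSpace X] [MeasurableSpace X] [BorelSpace X]
    {d N : ℕ} (hN : 0 < N)
    (Γ : Matrix (Fin d) (Fin d) ℝ) (hΓ : Γ.PosDef)
    (ρ : (Fin d → ℝ) → ℝ) (Lρ Cb Ct : ℝ) (hρ : IsNoiseDensity Γ ρ Lρ Cb Ct)
    (μp : Measure X) [IsProbabilityMeasure μp]
    (M : ℝ) (hM : 0 < M) (hsupp : μp {u : X | ‖u‖ ≤ M} = 1)
    (T : ℝ) (hT : 0 < T)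
    (ts : Fin (N + 1) → ℝ) (hts : StrictMono ts)
    (hts0 : ts 0 = 0) (htsN : ts (Fin.last N) = T) :
    ∀ R > 0, ∀ Λ > 0, ∃ C > 0,
      ∀ SΔ : ℝ → X → X, (Measurable fun p : ℝ × X => SΔ p.1 p.2) →
        (∀ t ∈ Set.Icc (0 : ℝ) T, ∀ u : X, ‖SΔ t u‖ ≤ ‖u‖) →
      ∀ LΔ : Fin N → X → Fin d → ℝ, (∀ j, Measurable (LΔ j)) →
        (∀ j, Integrable (fun u => (gammaNorm Γ (LΔ j u)) ^ 2) μp ∧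
          Real.sqrt (∫ u, (gammaNorm Γ (LΔ j u)) ^ 2 ∂μp) ≤ Λ) →
      ∀ t ∈ Set.Icc (0 : ℝ) T, ∀ y y' : Fin N → Fin d → ℝ,
        gammaNormTuple Γ y ≤ R → gammaNormTuple Γ y' ≤ R →
        W1 (filteringDist μp ρ ts SΔ LΔ y t) (filteringDist μp ρ ts SΔ LΔ y' t)
          ≤ C * gammaNormTuple Γ (y - y') := by
  intro R hR Λ hΛ
  have hB1 : (1:ℝ) ≤ (max 1 Cb) ^ N := by
    calc (1:ℝ) = 1 ^ N := (one_pow N).symm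
      _ ≤ (max 1 Cb) ^ N := pow_le_pow_left₀ zero_le_one (le_max_left 1 Cb) N
  set B : ℝ := (max 1 Cb) ^ N with hBdef
  set c : ℝ := (min 1 Ct⁻¹) ^ N * Real.exp (-(R ^ 2 + 2 * N ^ 2 * Λ ^ 2)) / 2 with hcdef
  have hc : 0 < c := by
    have hm : (0:ℝ) < min 1 Ct⁻¹ := lt_min one_pos (inv_pos.mpr hρ.Ct_pos)
    have := mul_pos (pow_pos hm N) (Real.exp_pos (-(R ^ 2 + 2 * N ^ 2 * Λ ^ 2)))
    rw [hcdef]; linarith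
  set K : ℝ := B * N * Lρ with hKdef
  have hBpos : (0:ℝ) < B := lt_of_lt_of_le one_pos hB1
  have hK : 0 < K := by
    have hNpos : (0:ℝ) < N := by exact_mod_cast hN
    exact mul_pos (mul_pos hBpos hNpos) hρ.Lρ_pos
  set C : ℝ := M * (K / c + B * K / c ^ 2) with hCdef
  have hC : 0 < C :=
    mul_pos hM (add_pos (div_pos hK hc) (div_pos (mul_pos hBpos hK) (pow_pos hc 2)))
  refine ⟨C, hC, ?_⟩
  intro SΔ hSm hSb LΔ hLm hL2 t ht y y' hy hy'
  set k := numObs ts t with hk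
  set D := gammaNormTuple Γ (y - y') with hD
  have hD0 : 0 ≤ D := gammaNormTuple_nonneg _
  have hZ : c ≤ postZ μp ρ LΔ y k := postZ_lb hN hΓ hρ hLm hR hΛ hL2 hy
  have hZ' : c ≤ postZ μp ρ LΔ y' k := postZ_lb hN hΓ hρ hLm hR hΛ hL2 hy'
  have hZpos : 0 < postZ μp ρ LΔ y k := lt_of_lt_of_le hc hZ
  have hZ'pos : 0 < postZ μp ρ LΔ y' k := lt_of_lt_of_le hc hZ'
  have hSt : Measurable (SΔ t) := hSm.comp (measurable_const.prodMk measurable_id)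
  have haeM : ∀ᵐ u ∂μp, ‖u‖ ≤ M := by
    rw [ae_iff]
    have hms : MeasurableSet {u : X | ‖u‖ ≤ M} :=
      (isClosed_le continuous_norm continuous_const).measurableSet
    have h0 : {u : X | ¬ ‖u‖ ≤ M} = {u : X | ‖u‖ ≤ M}ᶜ := rfl
    rw [h0, measure_compl hms (measure_ne_top _ _), hsupp, measure_univ]
    simp
  have hpd_diff : ∀ u, |postDensity ρ LΔ y k u - postDensity ρ LΔ y' k u| ≤ K * D := by
    intro u
    calc |postDensity ρ LΔ y k u - postDensity ρ LΔ y' k u|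
        ≤ (max 1 Cb) ^ N * N * (Lρ * D) :=
          postDensity_diff (Γ := Γ) (y := y) (y' := y') (L := LΔ) (k := k) hρ u
      _ = K * D := by rw [hKdef, hBdef]; ring
  have hKD0 : 0 ≤ K * D := mul_nonneg hK.le hD0
  have hZdiff : |postZ μp ρ LΔ y k - postZ μp ρ LΔ y' k| ≤ K * D := by
    have hint1 := postDensity_integrable (Γ := Γ) (y := y) (k := k) (μp := μp) hρ hLm
    have hint2 := postDensity_integrable (Γ := Γ) (y := y') (k := k) (μp := μp) hρ hLm
    have h1 : postZ μp ρ LΔ y k - postZ μp ρ LΔ y' k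
        = ∫ u, (postDensity ρ LΔ y k u - postDensity ρ LΔ y' k u) ∂μp := by
      rw [integral_sub hint1 hint2]; rfl
    rw [h1]
    calc |∫ u, (postDensity ρ LΔ y k u - postDensity ρ LΔ y' k u) ∂μp|
        ≤ ∫ u, |postDensity ρ LΔ y k u - postDensity ρ LΔ y' k u| ∂μp := by
          rw [← Real.norm_eq_abs]
          refine (norm_integral_le_integral_norm _).trans ?_
          simp [Real.norm_eq_abs]
      _ ≤ ∫ _u, K * D ∂μp :=
          integral_mono ((hint1.sub hint2).abs) (integrable_const _) fun u => hpd_diff u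
      _ = K * D := by simp
  have hpdB : ∀ (z : Fin N → Fin d → ℝ) (u : X), postDensity ρ LΔ z k u ≤ B :=
    fun z u => postDensity_le hρ u
  have key : ∀ (z : Fin N → Fin d → ℝ) (Φ : X → ℝ), LipschitzWith 1 Φ →
      0 < postZ μp ρ LΔ z k →
      ∫ v, Φ v ∂(filteringDist μp ρ ts SΔ LΔ z t)
        = ∫ u, (postDensity ρ LΔ z k u / postZ μp ρ LΔ z k) * Φ (SΔ t u) ∂μp := by
    intro z Φ hΦ hZz
    simp only [filteringDist, ← hk]
    rw [integral_map hSt.aemeasurable hΦ.continuous.aestronglyMeasurable]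
    simp only [posteriorK]
    have hmeas : Measurable (fun u => Real.toNNReal
        (postDensity ρ LΔ z k u / postZ μp ρ LΔ z k)) :=
      measurable_real_toNNReal.comp ((postDensity_measurable hρ hLm).div_const _)
    rw [show (fun u => ENNReal.ofReal (postDensity ρ LΔ z k u / postZ μp ρ LΔ z k))
        = (fun u => ((Real.toNNReal (postDensity ρ LΔ z k u / postZ μp ρ LΔ z k)) : ℝ≥0∞))
          from rfl,
      integral_withDensity_eq_integral_smul hmeas (fun u => Φ (SΔ t u))]
    congr 1
    ext u
    rw [NNReal.smul_def, Real.coe_toNNReal _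
      (div_nonneg (postDensity_pos hρ u).le hZz.le), smul_eq_mul]
  apply Real.sSup_le
  · rintro r ⟨Φ, hΦ, hΦ0, rfl⟩
    rw [key y Φ hΦ hZpos, key y' Φ hΦ hZ'pos]
    set g : (Fin N → Fin d → ℝ) → X → ℝ := fun z u =>
      (postDensity ρ LΔ z k u / postZ μp ρ LΔ z k) * Φ (SΔ t u) with hg
    have hΦb : ∀ᵐ u ∂μp, |Φ (SΔ t u)| ≤ M := by
      filter_upwards [haeM] with u hu
      have h1 : |Φ (SΔ t u) - Φ 0| ≤ ‖SΔ t u - 0‖ := by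
        have h2 := hΦ.dist_le_mul (SΔ t u) 0
        rwa [Real.dist_eq, NNReal.coe_one, one_mul, dist_eq_norm] at h2
      rw [hΦ0, sub_zero, sub_zero] at h1
      exact h1.trans ((hSb t ht u).trans hu)
    have hgint : ∀ (z : Fin N → Fin d → ℝ), c ≤ postZ μp ρ LΔ z k →
        Integrable (g z) μp := by
      intro z hZz
      have hZzpos : 0 < postZ μp ρ LΔ z k := lt_of_lt_of_le hc hZz
      refine Integrable.mono' (integrable_const ((B / c) * M))
        ((((postDensity_measurable hρ hLm).div_const _).mul
          (hΦ.continuous.measurable.comp hSt)).aestronglyMeasurable) ?_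
      filter_upwards [hΦb] with u hu
      rw [Real.norm_eq_abs, hg, abs_mul, abs_div, abs_of_pos (postDensity_pos hρ u),
        abs_of_pos hZzpos]
      refine mul_le_mul ?_ hu (abs_nonneg _) (by positivity)
      exact div_le_div₀ hBpos.le (hpdB z u) hc hZz
    have hi1 := hgint y hZ
    have hi2 := hgint y' hZ'
    rw [← integral_sub hi1 hi2]
    have hptw : ∀ᵐ u ∂μp, g y u - g y' u ≤ C * D := by
      filter_upwards [hΦb] with u hu
      refine le_trans (le_abs_self _) ?_
      have hfac : g y u - g y' u
          = (postDensity ρ LΔ y k u / postZ μp ρ LΔ y k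
            - postDensity ρ LΔ y' k u / postZ μp ρ LΔ y' k) * Φ (SΔ t u) := by
        rw [hg]; ring
      rw [hfac, abs_mul]
      have hdens : |postDensity ρ LΔ y k u / postZ μp ρ LΔ y k
          - postDensity ρ LΔ y' k u / postZ μp ρ LΔ y' k|
            ≤ K * D / c + B * (K * D) / c ^ 2 := by
        have hsplit : postDensity ρ LΔ y k u / postZ μp ρ LΔ y k
            - postDensity ρ LΔ y' k u / postZ μp ρ LΔ y' k
          = (postDensity ρ LΔ y k u - postDensity ρ LΔ y' k u) / postZ μp ρ LΔ y k
            + postDensity ρ LΔ y' k u * (postZ μp ρ LΔ y' k - postZ μp ρ LΔ y k)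
              / (postZ μp ρ LΔ y k * postZ μp ρ LΔ y' k) := by
          field_simp
          ring
        rw [hsplit]
        refine (abs_add_le _ _).trans (add_le_add ?_ ?_)
        · rw [abs_div, abs_of_pos hZpos]
          exact div_le_div₀ hKD0 (hpd_diff u) hc hZ
        · rw [abs_div, abs_mul, abs_of_pos (mul_pos hZpos hZ'pos)]
          have hnum : |postDensity ρ LΔ y' k u| * |postZ μp ρ LΔ y' k - postZ μp ρ LΔ y k|
              ≤ B * (K * D) := by
            refine mul_le_mul ?_ ?_ (abs_nonneg _) hBpos.le
            · rw [abs_of_pos (postDensity_pos hρ u)]; exact hpdB y' u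
            · rw [abs_sub_comm]; exact hZdiff
          refine div_le_div₀ (mul_nonneg hBpos.le hKD0) hnum (pow_pos hc 2) ?_
          calc c ^ 2 = c * c := sq c
            _ ≤ postZ μp ρ LΔ y k * postZ μp ρ LΔ y' k :=
                mul_le_mul hZ hZ' hc.le hZpos.le
      calc |postDensity ρ LΔ y k u / postZ μp ρ LΔ y k
            - postDensity ρ LΔ y' k u / postZ μp ρ LΔ y' k| * |Φ (SΔ t u)|
          ≤ (K * D / c + B * (K * D) / c ^ 2) * M := by
            refine mul_le_mul hdens hu (abs_nonneg _) ?_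
            exact add_nonneg (div_nonneg hKD0 hc.le)
              (div_nonneg (mul_nonneg hBpos.le hKD0) (pow_pos hc 2).le)
        _ = C * D := by rw [hCdef]; ring
    calc ∫ u, (g y u - g y' u) ∂μp ≤ ∫ _u, C * D ∂μp :=
          integral_mono_ae (hi1.sub hi2) (integrable_const _) hptw
      _ = C * D := by simp
  · exact mul_nonneg hC.le hD0
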